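/- If A and B are normal complex n×n matrices, then for every closed disk S ⊆ ℂ, the number of eigenvalues of A in S (counted with multiplicity) and the number of eigenvalues of B in S (counted with multiplicity) differ by at most rank(A − B). -/

import Mathlib

open Matrix Module LinearMap Submodule Module.End Polynomial Finset

namespace Stmt9Aux

variable {n : ℕ}

local notation "E" => EuclideanSpace ℂ (Fin n)


lemma norm_sq_sum_smul (b : OrthonormalBasis (Fin n) ℂ E) (l : Fin n → ℂ) :
    ‖∑ j, l j • b j‖ ^ 2 = ∑ j, ‖l j‖ ^ 2 := by
  have h := b.orthonormal.inner_sum l l Finset.univ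
  have h2 :=
    @inner_self_eq_norm_sq ℂ _ _ _ _ (∑ j, l j • b j)
  rw [h] at h2
  rw [← h2]
  rw [map_sum]
  congr 1
  ext j
  rw [RCLike.conj_mul]
  norm_cast

lemma onb_of_internal {F : Type} [NormedAddCommGroup F] [InnerProductSpace ℂ F]
    [FiniteDimensional ℂ F] {n : ℕ} (hn : Module.finrank ℂ F = n)
    {ι : Type} [DecidableEq ι] (V : ι → Submodule ℂ F)
    (hInt : DirectSum.IsInternal V)
    (hOrth : OrthogonalFamily ℂ (fun i => ↥(V i)) (fun i => (V i).subtypeₗᵢ)) :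
    ∃ (b : OrthonormalBasis (Fin n) ℂ F) (μ : Fin n → ι),
      ∀ j, (b j : F) ∈ V (μ j) := by
  classical
  have hsup : iSupIndep V :=
    ((DirectSum.isInternal_submodule_iff_iSupIndep_and_iSup_eq_top V).mp hInt).1
  haveI : Fintype {i // V i ≠ ⊥} := hsup.fintypeNeBotOfFiniteDimensional
  have hInt' : DirectSum.IsInternal (fun i : {i // V i ≠ ⊥} => V i.val) :=
    DirectSum.isInternal_ne_bot_iff.mpr hInt
  have hOrth' : OrthogonalFamily ℂ (fun i : {i // V i ≠ ⊥} => ↥(V i.val))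
      (fun i => (V i.val).subtypeₗᵢ) := fun i j hij => hOrth (Subtype.val_injective.ne hij)
  exact ⟨hInt'.subordinateOrthonormalBasis hn hOrth',
    fun j => (hInt'.subordinateOrthonormalBasisIndex hn j hOrth').val,
    fun j => hInt'.subordinateOrthonormalBasis_subordinate hn j hOrth'⟩

set_option maxHeartbeats 1000000 in
lemma exists_eigenbasis (A : Matrix (Fin n) (Fin n) ℂ)
    (hA : A * A.conjTranspose = A.conjTranspose * A) :
    ∃ (b : OrthonormalBasis (Fin n) ℂ E) (d : Fin n → ℂ),
      ∀ j, Matrix.toEuclideanLin A (b j) = d j • b j := by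
  classical
  set T : E →ₗ[ℂ] E := Matrix.toEuclideanLin A with hT
  set Ts : E →ₗ[ℂ] E := LinearMap.adjoint T with hTs
  have hadj : Ts = Matrix.toEuclideanLin Aᴴ :=
    (Matrix.toEuclideanLin_conjTranspose_eq_adjoint A).symm
  have hcomm : T * Ts = Ts * T := by
    rw [hadj, hT]
    have e1 : (Matrix.toEuclideanLin (A * Aᴴ) : E →ₗ[ℂ] E)
        = Matrix.toEuclideanLin A * Matrix.toEuclideanLin Aᴴ := by
      rw [Matrix.toEuclideanLin_eq_toLin, Matrix.toLin_mul (PiLp.basisFun 2 ℂ (Fin n))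
        (PiLp.basisFun 2 ℂ (Fin n)) (PiLp.basisFun 2 ℂ (Fin n))]
      rfl
    have e2 : (Matrix.toEuclideanLin (Aᴴ * A) : E →ₗ[ℂ] E)
        = Matrix.toEuclideanLin Aᴴ * Matrix.toEuclideanLin A := by
      rw [Matrix.toEuclideanLin_eq_toLin, Matrix.toLin_mul (PiLp.basisFun 2 ℂ (Fin n))
        (PiLp.basisFun 2 ℂ (Fin n)) (PiLp.basisFun 2 ℂ (Fin n))]
      rfl
    rw [← e1, ← e2, hA]
  set H : E →ₗ[ℂ] E := T + Ts with hH
  set K : E →ₗ[ℂ] E := Complex.I • (T - Ts) with hK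
  have hHsymm : H.IsSymmetric := by
    rw [LinearMap.isSymmetric_iff_isSelfAdjoint, LinearMap.isSelfAdjoint_iff']
    rw [hH, map_add, hTs, LinearMap.adjoint_adjoint]
    exact add_comm _ _
  have hKsymm : K.IsSymmetric := by
    rw [LinearMap.isSymmetric_iff_isSelfAdjoint, LinearMap.isSelfAdjoint_iff']
    rw [hK, map_smulₛₗ, map_sub, hTs, LinearMap.adjoint_adjoint]
    rw [Complex.conj_I, neg_smul, ← smul_neg, neg_sub]
  have hHK : Commute H K := by
    have h1 : (T + Ts) * (T - Ts) = (T - Ts) * (T + Ts) := by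
      simp only [mul_sub, sub_mul, mul_add, add_mul, hcomm]
      abel
    show H * K = K * H
    rw [hH, hK, mul_smul_comm, smul_mul_assoc, h1]
  have hn : Module.finrank ℂ E = n := finrank_euclideanSpace_fin
  set V : ℂ × ℂ → Submodule ℂ E := fun i => eigenspace H i.2 ⊓ eigenspace K i.1 with hV
  have hInt : DirectSum.IsInternal V :=
    LinearMap.IsSymmetric.directSum_isInternal_of_commute hHsymm hKsymm hHK
  have hOrth := LinearMap.IsSymmetric.orthogonalFamily_eigenspace_inf_eigenspace hHsymm hKsymm
  obtain ⟨b, μ, hbμ⟩ := onb_of_internal hn V hInt hOrth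
  refine ⟨b, fun j => ((μ j).2 - Complex.I * (μ j).1) / 2, fun j => ?_⟩
  have hmem := hbμ j
  rw [hV] at hmem
  rw [Submodule.mem_inf] at hmem
  have h2 : T (b j) + Ts (b j) = (μ j).2 • b j := by
    have := Module.End.mem_eigenspace_iff.mp hmem.1
    simpa [hH] using this
  have h3 : Complex.I • (T (b j) - Ts (b j)) = (μ j).1 • b j := by
    have := Module.End.mem_eigenspace_iff.mp hmem.2
    simpa [hK] using this
  have h4 : T (b j) - Ts (b j) = (-(Complex.I) * (μ j).1) • b j := by
    have := congrArg (fun y => (-(Complex.I)) • y) h3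
    simpa [smul_smul, Complex.I_mul_I, neg_mul] using this
  have h5 : T (b j) + T (b j) = (μ j).2 • b j + (-(Complex.I) * (μ j).1) • b j := by
    rw [← h2, ← h4]; abel
  have h6 : (2 : ℂ) • T (b j) = (2 : ℂ) • ((((μ j).2 - Complex.I * (μ j).1) / 2) • b j) := by
    rw [two_smul, h5, smul_smul]
    rw [← add_smul]
    congr 1
    ring
  exact smul_right_injective _ (two_ne_zero (α := ℂ)) h6

lemma charpoly_eq_roots (A : Matrix (Fin n) (Fin n) ℂ)
    (b : OrthonormalBasis (Fin n) ℂ E) (d : Fin n → ℂ)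
    (h : ∀ j, Matrix.toEuclideanLin A (b j) = d j • b j) :
    A.charpoly.roots = Finset.univ.val.map d := by
  classical
  have h1 : A.charpoly = (Matrix.toEuclideanLin A : E →ₗ[ℂ] E).charpoly := by
    conv_rhs => rw [← LinearMap.charpoly_toMatrix (Matrix.toEuclideanLin A : E →ₗ[ℂ] E)
      (PiLp.basisFun 2 ℂ (Fin n))]
    congr 1
    rw [Matrix.toEuclideanLin_eq_toLin, LinearMap.toMatrix_toLin]
  have h2 : (LinearMap.toMatrix b.toBasis b.toBasis (Matrix.toEuclideanLin A : E →ₗ[ℂ] E))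
      = Matrix.diagonal d := by
    ext i j
    rw [LinearMap.toMatrix_apply, OrthonormalBasis.coe_toBasis, h j, _root_.map_smul,
      ← OrthonormalBasis.coe_toBasis, Basis.repr_self]
    by_cases hij : i = j
    · subst hij; simp
    · simp [Finsupp.single_apply, Matrix.diagonal_apply, hij, Ne.symm hij]
  have h3 : A.charpoly = (Matrix.diagonal d).charpoly := by
    rw [h1, ← LinearMap.charpoly_toMatrix (Matrix.toEuclideanLin A : E →ₗ[ℂ] E) b.toBasis, h2]
  have h4 : (Matrix.diagonal d).charpoly = ∏ i, (X - C (d i)) := by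
    rw [Matrix.charpoly]
    have : charmatrix (Matrix.diagonal d) = Matrix.diagonal fun i => X - C (d i) := by
      ext i j
      by_cases hij : i = j
      · subst hij; simp [Matrix.charmatrix_apply_eq, Matrix.diagonal_apply_eq]
      · simp [Matrix.charmatrix_apply_ne _ _ _ hij, Matrix.diagonal_apply_ne _ hij]
    rw [this, Matrix.det_diagonal]
  rw [h3, h4]
  have h5 : ∏ i, (X - C (d i)) = ((Finset.univ.val.map d).map fun a => X - C a).prod := by
    rw [Multiset.map_map]
    rfl
  rw [h5, Polynomial.roots_multiset_prod_X_sub_C]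

lemma finrank_span_image (b : OrthonormalBasis (Fin n) ℂ E) (s : Finset (Fin n)) :
    Module.finrank ℂ (span ℂ (⇑b '' ↑s)) = s.card := by
  classical
  have li : LinearIndependent ℂ (fun j : ↥(↑s : Set (Fin n)) => b j) := by
    have h := b.toBasis.linearIndependent
    rw [OrthonormalBasis.coe_toBasis] at h
    exact h.comp _ Subtype.val_injective
  have h2 := finrank_span_eq_card li
  rw [← Set.image_eq_range] at h2
  rw [h2]
  simp

lemma repr_eq_zero_of_mem_span (b : OrthonormalBasis (Fin n) ℂ E) (s : Finset (Fin n))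
    {x : EuclideanSpace ℂ (Fin n)} (hx : x ∈ span ℂ (⇑b '' ↑s)) {j : Fin n} (hj : j ∉ s) :
    b.repr x j = 0 := by
  classical
  rw [← OrthonormalBasis.coe_toBasis] at hx
  rw [Basis.mem_span_image] at hx
  rw [← OrthonormalBasis.coe_toBasis_repr_apply]
  by_contra hne
  exact hj (hx (Finsupp.mem_support_iff.mpr hne))

lemma rank_nullity_mat (M : Matrix (Fin n) (Fin n) ℂ) :
    Module.finrank ℂ (LinearMap.ker (Matrix.toEuclideanLin M)) + M.rank = n := by
  rw [Matrix.rank_eq_finrank_range_toLin M (PiLp.basisFun 2 ℂ (Fin n)) (PiLp.basisFun 2 ℂ (Fin n))]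
  rw [← Matrix.toEuclideanLin_eq_toLin]
  rw [add_comm, LinearMap.finrank_range_add_finrank_ker]
  exact finrank_euclideanSpace_fin

lemma rank_neg_mat (M : Matrix (Fin n) (Fin n) ℂ) : (-M).rank = M.rank := by
  unfold Matrix.rank
  have h1 : (-M).mulVecLin = -(M.mulVecLin) := by
    ext x
    simp [Matrix.neg_mulVec]
  rw [h1, LinearMap.range_neg]


lemma norm_sq_eq (b : OrthonormalBasis (Fin n) ℂ E) (x : EuclideanSpace ℂ (Fin n)) :
    ‖x‖ ^ 2 = ∑ j, ‖b.repr x j‖ ^ 2 := by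
  conv_lhs => rw [← b.sum_repr x]
  rw [norm_sq_sum_smul]

lemma norm_sq_sub_eq (b : OrthonormalBasis (Fin n) ℂ E) (d : Fin n → ℂ)
    (T : EuclideanSpace ℂ (Fin n) →ₗ[ℂ] EuclideanSpace ℂ (Fin n))
    (hT : ∀ j, T (b j) = d j • b j) (a : ℂ) (x : EuclideanSpace ℂ (Fin n)) :
    ‖T x - a • x‖ ^ 2 = ∑ j, ‖d j - a‖ ^ 2 * ‖b.repr x j‖ ^ 2 := by
  have h1 : T x - a • x = ∑ j, ((d j - a) * b.repr x j) • b j := by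
    conv_lhs => rw [← b.sum_repr x]
    rw [map_sum, Finset.smul_sum, ← Finset.sum_sub_distrib]
    refine Finset.sum_congr rfl fun j _ => ?_
    rw [_root_.map_smul, hT j, smul_smul, smul_smul, ← sub_smul]
    congr 1
    ring
  rw [h1, norm_sq_sum_smul]
  refine Finset.sum_congr rfl fun j _ => ?_
  rw [norm_mul, mul_pow]

set_option maxHeartbeats 1000000 in
lemma key (A B : Matrix (Fin n) (Fin n) ℂ)
    (hA : A * A.conjTranspose = A.conjTranspose * A)
    (hB : B * B.conjTranspose = B.conjTranspose * B)
    (a : ℂ) (r : ℝ) (hr : 0 ≤ r) :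
    (A.charpoly.roots.filter fun z => ‖z - a‖ ≤ r).card ≤
      (B.charpoly.roots.filter fun z => ‖z - a‖ ≤ r).card + (A - B).rank := by
  classical
  obtain ⟨bA, dA, hA'⟩ := exists_eigenbasis A hA
  obtain ⟨bB, dB, hB'⟩ := exists_eigenbasis B hB
  have hrootsA := charpoly_eq_roots A bA dA hA'
  have hrootsB := charpoly_eq_roots B bB dB hB'
  set sA : Finset (Fin n) := Finset.univ.filter (fun j => ‖dA j - a‖ ≤ r) with hsA
  set sB : Finset (Fin n) := Finset.univ.filter (fun j => ¬ (‖dB j - a‖ ≤ r)) with hsB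
  have hcardA : (A.charpoly.roots.filter fun z => ‖z - a‖ ≤ r).card = sA.card := by
    rw [hrootsA, Multiset.filter_map, Multiset.card_map]
    rfl
  have hcardB : (B.charpoly.roots.filter fun z => ‖z - a‖ ≤ r).card
      = n - sB.card := by
    rw [hrootsB, Multiset.filter_map, Multiset.card_map]
    have h0 : (Finset.univ.filter (fun j => ‖dB j - a‖ ≤ r)).card + sB.card = n := by
      rw [hsB, Finset.card_filter_add_card_filter_not]
      simp
    have h1 : (Multiset.filter ((fun z => ‖z - a‖ ≤ r) ∘ dB) Finset.univ.val).card
        = (Finset.univ.filter (fun j => ‖dB j - a‖ ≤ r)).card := by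
      rfl
    omega
  rw [hcardA, hcardB]
  set V : Submodule ℂ (EuclideanSpace ℂ (Fin n)) := span ℂ (⇑bA '' ↑sA) with hV
  set W : Submodule ℂ (EuclideanSpace ℂ (Fin n)) := span ℂ (⇑bB '' ↑sB) with hW
  set Kr : Submodule ℂ (EuclideanSpace ℂ (Fin n)) :=
    LinearMap.ker (Matrix.toEuclideanLin (A - B)) with hKr
  have dV : Module.finrank ℂ V = sA.card := finrank_span_image bA sA
  have dW : Module.finrank ℂ W = sB.card := finrank_span_image bB sB
  have dK : Module.finrank ℂ Kr + (A - B).rank = n := rank_nullity_mat (A - B)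
  have hsBle : sB.card ≤ n := by
    have := Finset.card_le_card (Finset.subset_univ sB)
    simpa using this
  by_contra hcon
  push_neg at hcon
  have e1 : Module.finrank ℂ ↥(V ⊓ W) + n ≥ Module.finrank ℂ V + Module.finrank ℂ W := by
    rw [← Submodule.finrank_sup_add_finrank_inf_eq]
    have h2 : Module.finrank ℂ ↥(V ⊔ W) ≤ n := by
      have := Submodule.finrank_le (V ⊔ W)
      rwa [finrank_euclideanSpace_fin] at this
    omega
  have e2 : Module.finrank ℂ ↥(V ⊓ W ⊓ Kr) + n
      ≥ Module.finrank ℂ ↥(V ⊓ W) + Module.finrank ℂ Kr := by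
    rw [← Submodule.finrank_sup_add_finrank_inf_eq (V ⊓ W) Kr]
    have h2 : Module.finrank ℂ ↥(V ⊓ W ⊔ Kr) ≤ n := by
      have := Submodule.finrank_le (V ⊓ W ⊔ Kr)
      rwa [finrank_euclideanSpace_fin] at this
    omega
  have hpos : 0 < Module.finrank ℂ ↥(V ⊓ W ⊓ Kr) := by omega
  obtain ⟨⟨x, hxmem⟩, hxne⟩ := Module.finrank_pos_iff_exists_ne_zero.mp hpos
  have hxne' : x ≠ 0 := by
    intro h
    exact hxne (Subtype.ext h)
  obtain ⟨⟨hxV, hxW⟩, hxK⟩ := hxmem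
  -- A side bound
  have hA2 : ‖Matrix.toEuclideanLin A x - a • x‖ ^ 2 ≤ r ^ 2 * ‖x‖ ^ 2 := by
    rw [norm_sq_sub_eq bA dA _ hA' a x, norm_sq_eq bA x, Finset.mul_sum]
    refine Finset.sum_le_sum fun j _ => ?_
    by_cases hj : j ∈ sA
    · have h3 : ‖dA j - a‖ ≤ r := by
        rw [hsA] at hj
        simpa using hj
      have h4 : (0:ℝ) ≤ ‖bA.repr x j‖ ^ 2 := by positivity
      have h5 : (0:ℝ) ≤ ‖dA j - a‖ := norm_nonneg _
      have h6 : ‖dA j - a‖ ^ 2 ≤ r ^ 2 := by nlinarith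
      exact mul_le_mul_of_nonneg_right h6 h4
    · rw [repr_eq_zero_of_mem_span bA sA hxV hj]
      simp
  -- B side strict bound
  have hB2 : r ^ 2 * ‖x‖ ^ 2 < ‖Matrix.toEuclideanLin B x - a • x‖ ^ 2 := by
    rw [norm_sq_sub_eq bB dB _ hB' a x, norm_sq_eq bB x, Finset.mul_sum]
    have hrepr : ∃ j, bB.repr x j ≠ 0 := by
      by_contra hc
      push_neg at hc
      apply hxne'
      have h6 : bB.repr x = 0 := by ext j; simpa using hc j
      have := congrArg bB.repr.symm h6
      simpa using this
    obtain ⟨j0, hj0⟩ := hrepr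
    have hj0mem : j0 ∈ sB := by
      by_contra hc
      exact hj0 (repr_eq_zero_of_mem_span bB sB hxW hc)
    refine Finset.sum_lt_sum (fun j _ => ?_) ⟨j0, Finset.mem_univ j0, ?_⟩
    · by_cases hj : j ∈ sB
      · have h3 : r < ‖dB j - a‖ := by
          rw [hsB] at hj
          simp only [Finset.mem_filter, Finset.mem_univ, true_and, not_le] at hj
          exact hj
        have h4 : (0:ℝ) ≤ ‖bB.repr x j‖ ^ 2 := by positivity
        have h6 : r ^ 2 ≤ ‖dB j - a‖ ^ 2 := by nlinarith
        exact mul_le_mul_of_nonneg_right h6 h4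
      · rw [repr_eq_zero_of_mem_span bB sB hxW hj]
        simp
    · have h3 : r < ‖dB j0 - a‖ := by
        rw [hsB] at hj0mem
        simp only [Finset.mem_filter, Finset.mem_univ, true_and, not_le] at hj0mem
        exact hj0mem
      have h4 : (0:ℝ) < ‖bB.repr x j0‖ ^ 2 := pow_pos (norm_pos_iff.2 hj0) 2
      have h6 : r ^ 2 < ‖dB j0 - a‖ ^ 2 := by nlinarith
      exact mul_lt_mul_of_pos_right h6 h4
  have heq : Matrix.toEuclideanLin A x = Matrix.toEuclideanLin B x := by
    have h7 : Matrix.toEuclideanLin (A - B) x = 0 := hxK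
    rw [map_sub, LinearMap.sub_apply] at h7
    exact sub_eq_zero.mp h7
  rw [heq] at hA2
  -- contradiction with sA.card > (n - sB.card) + rank
  have : (‖Matrix.toEuclideanLin B x - a • x‖ : ℝ) ^ 2 ≤ r ^ 2 * ‖x‖ ^ 2 := hA2
  linarith

end Stmt9Aux

/-- Corollary: for normal matrices `A`, `B`, the numbers of eigenvalues
(with multiplicity) in any closed disk differ by at most `rank (A - B)`. -/
theorem stmt_9 {n : ℕ} (A B : Matrix (Fin n) (Fin n) ℂ)
    (hA : A * A.conjTranspose = A.conjTranspose * A)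
    (hB : B * B.conjTranspose = B.conjTranspose * B)
    (a : ℂ) (r : ℝ) (hr : 0 ≤ r) :
    |((A.charpoly.roots.filter fun z => ‖z - a‖ ≤ r).card : ℤ) -
      ((B.charpoly.roots.filter fun z => ‖z - a‖ ≤ r).card : ℤ)| ≤
      (A - B).rank := by
  have h1 := Stmt9Aux.key A B hA hB a r hr
  have h2 := Stmt9Aux.key B A hB hA a r hr
  have h3 : (B - A).rank = (A - B).rank := by
    rw [show B - A = -(A - B) by abel, Stmt9Aux.rank_neg_mat]
  rw [h3] at h2
  rw [abs_sub_le_iff]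
  omega
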